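/- Let E[W_n] = (a/g_n)·∑_{j=1}^{n} g_j + W₀/g_n where g_n = Γ(n + t)·Γ(t + λ)/(Γ(t)·Γ(n + t + λ)) with t = T₀/σ > 0 and λ = Λ = m(a_{m−1}−a_m)/σ < 1, a = a_m. Then the closed form E[W_n] = a·(n + t)/(1 − λ) + (W₀ − a·t/(1−λ))·C(n−1+t+λ, n)/C(n−1+t, n) holds, where C(z,n) is the generalized binomial coefficient. -/

import Mathlib

open Finset Polynomial

/-- Generalized binomial coefficient `C(z,n) = z(z-1)⋯(z-n+1)/n!` for real `z`. -/
noncomputable def genChoose (z : ℝ) (n : ℕ) : ℝ :=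
  (descPochhammer ℝ n).eval z / n.factorial

lemma poch_gamma (x : ℝ) (hx : 0 < x) :
    ∀ n : ℕ, (descPochhammer ℝ n).eval ((n : ℝ) - 1 + x) = Real.Gamma (n + x) / Real.Gamma x := by
  intro n
  induction n with
  | zero =>
    simp [div_self (Real.Gamma_pos_of_pos hx).ne']
  | succ n ih =>
    have h1 : ((n + 1 : ℕ) : ℝ) - 1 + x = (n : ℝ) + x := by push_cast; ring
    rw [descPochhammer_succ_left, h1]
    simp only [Polynomial.eval_mul, Polynomial.eval_X, Polynomial.eval_comp,
      Polynomial.eval_sub, Polynomial.eval_one]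
    have h2 : (n : ℝ) + x - 1 = (n : ℝ) - 1 + x := by ring
    rw [h2, ih]
    have hnx : (0 : ℝ) < (n : ℝ) + x := by positivity
    have hG : Real.Gamma ((n : ℝ) + x + 1) = ((n : ℝ) + x) * Real.Gamma ((n : ℝ) + x) :=
      Real.Gamma_add_one hnx.ne'
    have h3 : ((n + 1 : ℕ) : ℝ) + x = (n : ℝ) + x + 1 := by push_cast; ring
    rw [h3, hG]
    ring

/-- Closed form of the expectation: if `E[W_n] = (a/g_n)·∑_{j=1}^n g_j + W₀/g_n` with
`g_n = Γ(n+t)Γ(t+λ)/(Γ(t)Γ(n+t+λ))`, `t > 0`, `λ < 1`, `t + λ > 0`, then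
`E[W_n] = a(n+t)/(1-λ) + (W₀ - a·t/(1-λ))·C(n-1+t+λ,n)/C(n-1+t,n)`. -/
theorem expectation_closed_form (t lam a W₀ : ℝ) (ht : 0 < t) (hlam : lam < 1)
    (htlam : 0 < t + lam) (g Ew : ℕ → ℝ)
    (hg : ∀ n, g n = Real.Gamma (n + t) * Real.Gamma (t + lam)
        / (Real.Gamma t * Real.Gamma (n + t + lam)))
    (hEw : ∀ n, Ew n = (a / g n) * ∑ j ∈ Icc 1 n, g j + W₀ / g n) :
    ∀ n : ℕ, Ew n = a * (n + t) / (1 - lam)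
        + (W₀ - a * t / (1 - lam))
          * genChoose ((n : ℝ) - 1 + t + lam) n / genChoose ((n : ℝ) - 1 + t) n := by
  have hΓt : 0 < Real.Gamma t := Real.Gamma_pos_of_pos ht
  have hΓtl : 0 < Real.Gamma (t + lam) := Real.Gamma_pos_of_pos htlam
  have hΓnt : ∀ n : ℕ, 0 < Real.Gamma ((n : ℝ) + t) := fun n =>
    Real.Gamma_pos_of_pos (by positivity)
  have hntl' : ∀ n : ℕ, (0 : ℝ) < (n : ℝ) + t + lam := by
    intro n; have := Nat.cast_nonneg (α := ℝ) n; linarith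
  have hΓntl : ∀ n : ℕ, 0 < Real.Gamma ((n : ℝ) + t + lam) := fun n =>
    Real.Gamma_pos_of_pos (hntl' n)
  have hgpos : ∀ n, 0 < g n := by
    intro n; rw [hg n]; exact div_pos (mul_pos (hΓnt n) hΓtl) (mul_pos hΓt (hΓntl n))
  -- recurrence
  have hrec : ∀ n : ℕ, ((n : ℝ) + t + lam) * g (n + 1) = ((n : ℝ) + t) * g n := by
    intro n
    have hnt : (0 : ℝ) < (n : ℝ) + t := by positivity
    have hntl : (0 : ℝ) < (n : ℝ) + t + lam := hntl' n
    have e1 : ((n + 1 : ℕ) : ℝ) + t = (n : ℝ) + t + 1 := by push_cast; ring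
    have e2 : ((n + 1 : ℕ) : ℝ) + t + lam = ((n : ℝ) + t + lam) + 1 := by push_cast; ring
    rw [hg (n + 1), hg n, e2, e1, Real.Gamma_add_one hnt.ne', Real.Gamma_add_one hntl.ne']
    field_simp
  -- sum formula
  have hsum : ∀ n : ℕ, (1 - lam) * ∑ j ∈ Icc 1 n, g j = ((n : ℝ) + t) * g n - t := by
    intro n
    induction n with
    | zero =>
      have : g 0 = 1 := by
        rw [hg 0]
        simp only [Nat.cast_zero, zero_add]
        exact div_self (mul_pos hΓt hΓtl).ne'
      simp [this]
    | succ n ih =>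
      rw [Finset.sum_Icc_succ_top (by omega : 1 ≤ n + 1), mul_add, ih]
      push_cast
      linear_combination (-1 : ℝ) * hrec n
  intro n
  -- genChoose values
  have hx1 : genChoose ((n : ℝ) - 1 + t + lam) n
      = Real.Gamma ((n : ℝ) + t + lam) / Real.Gamma (t + lam) / (n.factorial : ℝ) := by
    unfold genChoose
    have : (n : ℝ) - 1 + t + lam = (n : ℝ) - 1 + (t + lam) := by ring
    rw [this, poch_gamma (t + lam) htlam n]
    ring_nf
  have hx2 : genChoose ((n : ℝ) - 1 + t) n
      = Real.Gamma ((n : ℝ) + t) / Real.Gamma t / (n.factorial : ℝ) := by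
    unfold genChoose
    rw [poch_gamma t ht n]
  have hfac : (0 : ℝ) < (n.factorial : ℝ) := by positivity
  have hS := hsum n
  have h1l : (1 : ℝ) - lam ≠ 0 := by linarith
  have hSval : ∑ j ∈ Icc 1 n, g j = (((n : ℝ) + t) * g n - t) / (1 - lam) := by
    field_simp at hS ⊢; linarith [hS]
  have hinv : genChoose ((n : ℝ) - 1 + t + lam) n / genChoose ((n : ℝ) - 1 + t) n
      = 1 / g n := by
    rw [hx1, hx2, hg n,
      div_eq_div_iff (div_pos (div_pos (hΓnt n) hΓt) hfac).ne'
        (div_pos (mul_pos (hΓnt n) hΓtl) (mul_pos hΓt (hΓntl n))).ne']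
    field_simp [(hΓnt n).ne', hΓt.ne', hΓtl.ne', (hΓntl n).ne', hfac.ne']
  rw [hEw n, hSval, mul_div_assoc, mul_div_assoc, hinv]
  field_simp [(hgpos n).ne', h1l]
  ring
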